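/- arXiv:2408.03756 — 5 statements merged into one kernel-verified Lean document; each statement's English description precedes it below -/
import Mathlib

section
/- Let C_tx ∈ ℂ^{n×n} and C_rx ∈ ℂ^{m×m} be positive semidefinite Hermitian matrices with tr(C_rx) > 0, P ∈ ℂ^{p×n}, and σ² > 0. Then log det(I + (1/σ²)(P C_tx P^H) ⊗ C_rx) ≥ log det(I + (1/σ²) tr(C_rx) · P C_tx P^H). -/
open Matrix Kronecker
open scoped ComplexOrder

/-- det is invariant under conjugation by a pair `W, W'` with `W * W' = 1`. -/
private lemma det_one_add_smul_conj {k : Type*} [Fintype k] [DecidableEq k]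
    (W W' D : Matrix k k ℂ) (hW : W * W' = 1) (r : ℝ) :
    (1 + r • (W * D * W')).det = (1 + r • D).det := by
  have h : 1 + r • (W * D * W') = W * (1 + r • D) * W' := by
    rw [Matrix.mul_add, Matrix.add_mul, Matrix.mul_one, hW]
    rw [Matrix.mul_smul, Matrix.smul_mul]
  rw [h, Matrix.det_mul, Matrix.det_mul, mul_comm (W.det), mul_assoc, ← Matrix.det_mul, hW,
    Matrix.det_one, mul_one]

private lemma one_add_sum_le_prod {ι : Type*} (s : Finset ι) (f : ι → ℝ)
    (hf : ∀ j ∈ s, 0 ≤ f j) : 1 + ∑ j ∈ s, f j ≤ ∏ j ∈ s, (1 + f j) := by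
  classical
  induction s using Finset.induction_on with
  | empty => simp
  | @insert a s' hx ih =>
    rw [Finset.sum_insert hx, Finset.prod_insert hx]
    have hfa : 0 ≤ f a := hf a (Finset.mem_insert_self a s')
    have hsum : 0 ≤ ∑ j ∈ s', f j :=
      Finset.sum_nonneg fun j hj => hf j (Finset.mem_insert_of_mem hj)
    have ih' := ih fun j hj => hf j (Finset.mem_insert_of_mem hj)
    calc 1 + (f a + ∑ j ∈ s', f j) ≤ (1 + f a) * (1 + ∑ j ∈ s', f j) := by nlinarith
    _ ≤ (1 + f a) * ∏ j ∈ s', (1 + f j) := by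
        apply mul_le_mul_of_nonneg_left ih' (by linarith)

/-- For PSD Hermitian `C_tx ∈ ℂ^{n×n}`, `C_rx ∈ ℂ^{m×m}` with `tr C_rx > 0`,
`P ∈ ℂ^{p×n}` and `σ² > 0`,
`log det(I + (1/σ²)(P C_tx P^H) ⊗ C_rx) ≥ log det(I + (1/σ²) tr(C_rx) P C_tx P^H)`. -/
theorem stmt2 {n m p : ℕ} (Ctx : Matrix (Fin n) (Fin n) ℂ) (Crx : Matrix (Fin m) (Fin m) ℂ)
    (hCtx : Ctx.PosSemidef) (hCrx : Crx.PosSemidef) (htr : 0 < Crx.trace.re)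
    (P : Matrix (Fin p) (Fin n) ℂ) (σsq : ℝ) (hσ : 0 < σsq) :
    Real.log ((1 + (1 / σsq) • ((P * Ctx * Pᴴ) ⊗ₖ Crx)).det.re)
      ≥ Real.log ((1 + (1 / σsq) • (Crx.trace • (P * Ctx * Pᴴ))).det.re) := by
  set A : Matrix (Fin p) (Fin p) ℂ := P * Ctx * Pᴴ with hAdef
  have hA : A.PosSemidef := by
    have := hCtx.conjTranspose_mul_mul_same Pᴴ
    simpa [hAdef] using this
  have hAH : A.IsHermitian := hA.1
  have hCH : Crx.IsHermitian := hCrx.1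
  set a : Fin p → ℝ := hAH.eigenvalues with ha
  set c : Fin m → ℝ := hCH.eigenvalues with hc
  have ha0 : ∀ i, 0 ≤ a i := hA.eigenvalues_nonneg
  have hc0 : ∀ j, 0 ≤ c j := hCrx.eigenvalues_nonneg
  set U : Matrix (Fin p) (Fin p) ℂ := (hAH.eigenvectorUnitary : Matrix (Fin p) (Fin p) ℂ)
    with hUdef
  set V : Matrix (Fin m) (Fin m) ℂ := (hCH.eigenvectorUnitary : Matrix (Fin m) (Fin m) ℂ)
    with hVdef
  have hU : U * star U = 1 := Matrix.mem_unitaryGroup_iff.mp hAH.eigenvectorUnitary.2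
  have hV : V * star V = 1 := Matrix.mem_unitaryGroup_iff.mp hCH.eigenvectorUnitary.2
  set DA : Matrix (Fin p) (Fin p) ℂ := Matrix.diagonal (fun i => (a i : ℂ)) with hDA
  set DC : Matrix (Fin m) (Fin m) ℂ := Matrix.diagonal (fun j => (c j : ℂ)) with hDC
  have hAspec : A = U * DA * star U := by
    have := hAH.spectral_theorem
    simpa [hUdef, hDA, Function.comp_def] using this
  have hCspec : Crx = V * DC * star V := by
    have := hCH.spectral_theorem
    simpa [hVdef, hDC, Function.comp_def] using this
  have ht : (0:ℝ) < 1 / σsq := by positivity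
  set t : ℝ := 1 / σsq with htdef
  -- trace of Crx
  have htrace : Crx.trace = ((∑ j, c j : ℝ) : ℂ) := by
    rw [hCspec, Matrix.trace_mul_cycle]
    have hV' : star V * V = 1 := Matrix.mem_unitaryGroup_iff'.mp hCH.eigenvectorUnitary.2
    rw [hV', Matrix.one_mul, Matrix.trace_diagonal]
    push_cast
    rfl
  -- LHS determinant
  have hkron : A ⊗ₖ Crx = (U ⊗ₖ V) * (DA ⊗ₖ DC) * ((star U) ⊗ₖ (star V)) := by
    rw [hAspec, hCspec, ← Matrix.mul_kronecker_mul, ← Matrix.mul_kronecker_mul]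
  have hkronU : (U ⊗ₖ V) * ((star U) ⊗ₖ (star V)) = 1 := by
    rw [← Matrix.mul_kronecker_mul, hU, hV, Matrix.one_kronecker_one]
  have hdetL : (1 + t • (A ⊗ₖ Crx)).det = ∏ ij : Fin p × Fin m,
      ((1 + t * (a ij.1 * c ij.2) : ℝ) : ℂ) := by
    rw [hkron, det_one_add_smul_conj _ _ _ hkronU, hDA, hDC,
      Matrix.diagonal_kronecker_diagonal]
    have : (1 : Matrix (Fin p × Fin m) (Fin p × Fin m) ℂ)
        + t • Matrix.diagonal (fun ij : Fin p × Fin m => (a ij.1 : ℂ) * (c ij.2 : ℂ))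
        = Matrix.diagonal (fun ij : Fin p × Fin m =>
            ((1 + t * (a ij.1 * c ij.2) : ℝ) : ℂ)) := by
      ext ij kl
      simp only [Matrix.add_apply, Matrix.smul_apply, Matrix.one_apply, Matrix.diagonal_apply]
      split_ifs with h
      · push_cast
        simp [Complex.real_smul]
        try ring
      · simp
    rw [this, Matrix.det_diagonal]
  -- RHS determinant
  have hRw : t • (Crx.trace • A) = ((t * ∑ j, c j : ℝ)) • A := by
    rw [htrace]
    ext i j
    simp only [Matrix.smul_apply, smul_eq_mul, Complex.real_smul]
    push_cast
    ring
  have hdetR : (1 + t • (Crx.trace • A)).det = ∏ i : Fin p,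
      ((1 + (t * ∑ j, c j) * a i : ℝ) : ℂ) := by
    rw [hRw, hAspec, det_one_add_smul_conj _ _ _ hU, hDA]
    have : (1 : Matrix (Fin p) (Fin p) ℂ)
        + (t * ∑ j, c j) • Matrix.diagonal (fun i => (a i : ℂ))
        = Matrix.diagonal (fun i => ((1 + (t * ∑ j, c j) * a i : ℝ) : ℂ)) := by
      ext i j
      simp only [Matrix.add_apply, Matrix.smul_apply, Matrix.one_apply, Matrix.diagonal_apply]
      split_ifs with h
      · push_cast
        simp [Complex.real_smul]
      · simp
    rw [this, Matrix.det_diagonal]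
  -- Real parts
  have hreL : (1 + t • (A ⊗ₖ Crx)).det.re
      = ∏ ij : Fin p × Fin m, (1 + t * (a ij.1 * c ij.2)) := by
    rw [hdetL, ← Complex.ofReal_prod, Complex.ofReal_re]
  have hreR : (1 + t • (Crx.trace • A)).det.re
      = ∏ i : Fin p, (1 + (t * ∑ j, c j) * a i) := by
    rw [hdetR, ← Complex.ofReal_prod, Complex.ofReal_re]
  rw [ge_iff_le, hreL, hreR]
  -- positivity of RHS
  have hRpos : ∀ i : Fin p, (0:ℝ) < 1 + (t * ∑ j, c j) * a i := by
    intro i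
    have : 0 ≤ (t * ∑ j, c j) * a i := by
      apply mul_nonneg (mul_nonneg ht.le (Finset.sum_nonneg fun j _ => hc0 j)) (ha0 i)
    linarith
  apply Real.log_le_log (Finset.prod_pos fun i _ => hRpos i)
  -- main product inequality
  rw [Fintype.prod_prod_type (f := fun ij : Fin p × Fin m => 1 + t * (a ij.1 * c ij.2))]
  apply Finset.prod_le_prod
  · intro i _; exact (hRpos i).le
  · intro i _
    have : 1 + (t * ∑ j, c j) * a i = 1 + ∑ j : Fin m, t * a i * c j := by
      congr 1
      rw [Finset.mul_sum, Finset.sum_mul]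
      exact Finset.sum_congr rfl fun j _ => by ring
    rw [this]
    have := one_add_sum_le_prod Finset.univ (fun j : Fin m => t * a i * c j)
      (fun j _ => mul_nonneg (mul_nonneg ht.le (ha0 i)) (hc0 j))
    refine this.trans_eq ?_
    apply Finset.prod_congr rfl
    intro j _
    ring_nf
end

section
/- Let C_tx ∈ ℂ^{n×n} and C_rx ∈ ℂ^{m×m} be positive semidefinite Hermitian, P ∈ ℂ^{p×n}, σ² > 0, and suppose rank(C_rx) = 1. Then log det(I + (1/σ²)(P C_tx P^H) ⊗ C_rx) = log det(I + (1/σ²) tr(C_rx) · P C_tx P^H). -/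
open Matrix Kronecker
open scoped ComplexOrder

lemma kron_conjTranspose {l m q r : Type*} (A : Matrix l m ℂ) (B : Matrix q r ℂ) :
    (A ⊗ₖ B)ᴴ = Aᴴ ⊗ₖ Bᴴ := by
  ext ⟨i, j⟩ ⟨k, s⟩
  simp [conjTranspose_apply, kroneckerMap_apply, mul_comm]

lemma real_smul_matrix {ι κ : Type*} (r : ℝ) (M : Matrix ι κ ℂ) :
    r • M = (r : ℂ) • M := by
  ext i j
  simp [Matrix.smul_apply, Complex.real_smul]

lemma det_unitary_conj {ι : Type*} [Fintype ι] [DecidableEq ι]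
    (W X : Matrix ι ι ℂ) (hW : W * Wᴴ = 1) : (W * X * Wᴴ).det = X.det := by
  have : W.det * Wᴴ.det = 1 := by rw [← det_mul, hW, det_one]
  rw [det_mul, det_mul]
  calc W.det * X.det * Wᴴ.det = (W.det * Wᴴ.det) * X.det := by ring
    _ = X.det := by rw [this, one_mul]

/-- For PSD Hermitian `C_tx`, `C_rx` with `rank C_rx = 1`, `P ∈ ℂ^{p×n}`,
`σ² > 0`:
`log det(I + (1/σ²)(P C_tx P^H) ⊗ C_rx) = log det(I + (1/σ²) tr(C_rx) P C_tx P^H)`. -/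
theorem stmt3 {n m p : ℕ} (Ctx : Matrix (Fin n) (Fin n) ℂ) (Crx : Matrix (Fin m) (Fin m) ℂ)
    (hCtx : Ctx.PosSemidef) (hCrx : Crx.PosSemidef) (hrk : Crx.rank = 1)
    (P : Matrix (Fin p) (Fin n) ℂ) (σsq : ℝ) (hσ : 0 < σsq) :
    Real.log ((1 + (1 / σsq) • ((P * Ctx * Pᴴ) ⊗ₖ Crx)).det.re)
      = Real.log ((1 + (1 / σsq) • (Crx.trace • (P * Ctx * Pᴴ))).det.re) := by
  set A := P * Ctx * Pᴴ with hAdef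
  have hA : A.PosSemidef := hCtx.mul_mul_conjTranspose_same P
  have hAh : A.IsHermitian := hA.1
  have hBh : Crx.IsHermitian := hCrx.1
  set c : ℂ := ((1 / σsq : ℝ) : ℂ) with hc
  set U : Matrix (Fin p) (Fin p) ℂ := (hAh.eigenvectorUnitary : Matrix (Fin p) (Fin p) ℂ) with hU
  set V : Matrix (Fin m) (Fin m) ℂ := (hBh.eigenvectorUnitary : Matrix (Fin m) (Fin m) ℂ) with hV
  set d : Fin p → ℝ := hAh.eigenvalues with hd
  set e : Fin m → ℝ := hBh.eigenvalues with he
  have hUU : U * Uᴴ = 1 := (Matrix.mem_unitaryGroup_iff).mp hAh.eigenvectorUnitary.2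
  have hVV : V * Vᴴ = 1 := (Matrix.mem_unitaryGroup_iff).mp hBh.eigenvectorUnitary.2
  have hVV' : Vᴴ * V = 1 := (Matrix.mem_unitaryGroup_iff').mp hBh.eigenvectorUnitary.2
  have hAspec : A = U * diagonal (fun i => (d i : ℂ)) * Uᴴ := by
    have := hAh.spectral_theorem
    exact this
  have hBspec : Crx = V * diagonal (fun j => (e j : ℂ)) * Vᴴ := by
    have := hBh.spectral_theorem
    exact this
  -- the unique nonzero eigenvalue of Crx
  have hcard : Fintype.card {j // e j ≠ 0} = 1 := by
    rw [← hBh.rank_eq_card_non_zero_eigs, hrk]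
  obtain ⟨⟨j0, hj0⟩, hj0u⟩ := Fintype.card_eq_one_iff.mp hcard
  have hzero : ∀ j, j ≠ j0 → e j = 0 := by
    intro j hj
    by_contra h
    exact hj (congrArg Subtype.val (hj0u ⟨j, h⟩))
  -- trace Crx = e j0
  have htr : Crx.trace = (e j0 : ℂ) := by
    rw [hBspec, Matrix.trace_mul_cycle, hVV', one_mul, trace_diagonal]
    exact Finset.sum_eq_single j0 (fun j _ hj => by simp [hzero j hj])
      (fun h => absurd (Finset.mem_univ j0) h)
  -- reduce to equality of determinants
  suffices h : (1 + (1 / σsq) • (A ⊗ₖ Crx)).det = (1 + (1 / σsq) • (Crx.trace • A)).det by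
    rw [h]
  -- LHS
  have hWW : (U ⊗ₖ V) * (U ⊗ₖ V)ᴴ = 1 := by
    rw [kron_conjTranspose, ← mul_kronecker_mul, hUU, hVV, one_kronecker_one]
  have hlhs : (1 + (1 / σsq) • (A ⊗ₖ Crx)).det
      = ∏ ij : Fin p × Fin m, (1 + c * ((d ij.1 : ℂ) * (e ij.2 : ℂ))) := by
    have hkron : A ⊗ₖ Crx = (U ⊗ₖ V) *
        (diagonal (fun ij : Fin p × Fin m => (d ij.1 : ℂ) * (e ij.2 : ℂ))) * (U ⊗ₖ V)ᴴ := by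
      rw [hAspec, hBspec, mul_kronecker_mul, mul_kronecker_mul, kron_conjTranspose,
        diagonal_kronecker_diagonal]
    have hconj : 1 + (1 / σsq) • (A ⊗ₖ Crx)
        = (U ⊗ₖ V) * (1 + c • diagonal (fun ij : Fin p × Fin m =>
            (d ij.1 : ℂ) * (e ij.2 : ℂ))) * (U ⊗ₖ V)ᴴ := by
      rw [real_smul_matrix, ← hc, hkron, mul_add, add_mul, mul_one, hWW,
        Matrix.mul_smul, Matrix.smul_mul]
    rw [hconj, det_unitary_conj _ _ hWW, ← diagonal_one, ← diagonal_smul, diagonal_add,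
      det_diagonal]
    simp [Pi.add_apply, smul_eq_mul]
  -- RHS
  have hrhs : (1 + (1 / σsq) • (Crx.trace • A)).det = ∏ i, (1 + c * (e j0 : ℂ) * (d i : ℂ)) := by
    have hconj : 1 + (1 / σsq) • (Crx.trace • A)
        = U * (1 + (c * (e j0 : ℂ)) • diagonal (fun i => (d i : ℂ))) * Uᴴ := by
      rw [real_smul_matrix, ← hc, htr, hAspec, mul_add, add_mul, mul_one, hUU,
        smul_smul, Matrix.mul_smul, Matrix.smul_mul]
    rw [hconj, det_unitary_conj _ _ hUU, ← diagonal_one, ← diagonal_smul, diagonal_add,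
      det_diagonal]
    simp [Pi.add_apply, smul_eq_mul]
  rw [hlhs, hrhs, Fintype.prod_prod_type]
  refine Finset.prod_congr rfl fun i _ => ?_
  rw [Finset.prod_eq_single j0 (fun j _ hj => by simp [hzero j hj])
    (fun h => absurd (Finset.mem_univ j0) h)]
  ring
end

section
/- Let C_tx ∈ ℂ^{n×n} be positive semidefinite Hermitian, P ∈ ℂ^{p×n} with P C_tx P^H ≠ 0, σ² > 0, and let C_rx ∈ ℂ^{m×m} (m ≥ 2) be positive semidefinite Hermitian with tr(C_rx) = τ > 0 and C_rx ≠ (τ/m) I. Then log det(I + (1/σ²)(P C_tx P^H) ⊗ C_rx) < log det(I + (1/σ²)(P C_tx P^H) ⊗ (τ/m) I), i.e., among all receive covariances with fixed trace τ, the CMI (and hence the gap to the trace-based lower bound) is maximized uniquely by the scaled identity. -/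
open Matrix Kronecker
open scoped ComplexOrder

/-- Determinant of `1 + s • (A ⊗ₖ B)` for Hermitian `A, B` as a product over eigenvalues. -/
lemma det_key {q r : ℕ} (A : Matrix (Fin q) (Fin q) ℂ) (hA : A.IsHermitian)
    (B : Matrix (Fin r) (Fin r) ℂ) (hB : B.IsHermitian) (s : ℝ) :
    (1 + s • (A ⊗ₖ B)).det
      = ∏ i, ∏ j, (((1 + s * (hA.eigenvalues i * hB.eigenvalues j) : ℝ)) : ℂ) := by
  set U : Matrix (Fin q) (Fin q) ℂ := (hA.eigenvectorUnitary : Matrix (Fin q) (Fin q) ℂ) with hUdef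
  set V : Matrix (Fin r) (Fin r) ℂ := (hB.eigenvectorUnitary : Matrix (Fin r) (Fin r) ℂ) with hVdef
  have hU : U * star U = 1 := mem_unitaryGroup_iff.mp hA.eigenvectorUnitary.2
  have hV : V * star V = 1 := mem_unitaryGroup_iff.mp hB.eigenvectorUnitary.2
  set D₁ : Matrix (Fin q) (Fin q) ℂ := diagonal (RCLike.ofReal ∘ hA.eigenvalues) with hD1
  set D₂ : Matrix (Fin r) (Fin r) ℂ := diagonal (RCLike.ofReal ∘ hB.eigenvalues) with hD2
  have hW : (U ⊗ₖ V) * ((star U) ⊗ₖ (star V)) = 1 := by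
    rw [← mul_kronecker_mul, hU, hV, one_kronecker_one]
  have hAB : A ⊗ₖ B = (U ⊗ₖ V) * (D₁ ⊗ₖ D₂) * ((star U) ⊗ₖ (star V)) := by
    rw [← mul_kronecker_mul, ← mul_kronecker_mul]
    conv_lhs => rw [hA.spectral_theorem, hB.spectral_theorem]
    rfl
  have key : 1 + s • (A ⊗ₖ B)
      = (U ⊗ₖ V) * (1 + s • (D₁ ⊗ₖ D₂)) * ((star U) ⊗ₖ (star V)) := by
    rw [mul_add, add_mul, mul_one, hW, mul_smul_comm, smul_mul_assoc, hAB, mul_assoc]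
  rw [key, det_mul, det_mul, mul_right_comm, ← det_mul, hW, det_one, one_mul]
  rw [hD1, hD2, diagonal_kronecker_diagonal, ← diagonal_one, ← diagonal_smul, diagonal_add,
    det_diagonal, Fintype.prod_prod_type]
  refine Finset.prod_congr rfl fun i _ => Finset.prod_congr rfl fun j _ => ?_
  simp only [Pi.add_apply, Pi.one_apply, Pi.smul_apply, Function.comp_apply]
  rw [Complex.real_smul]
  push_cast
  rfl

lemma log_prod_prod {q r : ℕ} (a : Fin q → Fin r → ℝ) (ha : ∀ i j, 0 < a i j) :
    Real.log (∏ i, ∏ j, a i j) = ∑ i, ∑ j, Real.log (a i j) := by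
  rw [Real.log_prod (fun i _ => (Finset.prod_pos fun j _ => ha i j).ne')]
  exact Finset.sum_congr rfl fun i _ => Real.log_prod fun j _ => (ha i j).ne'

lemma amgm_le {m : ℕ} (hm : 0 < m) (d : ℝ) (hd : 0 ≤ d) (μ : Fin m → ℝ)
    (hμ : ∀ j, 0 ≤ μ j) (τ : ℝ) (hsum : ∑ j, μ j = τ) :
    ∑ j, Real.log (1 + d * μ j) ≤ ∑ _j : Fin m, Real.log (1 + d * (τ / m)) := by
  have hm' : (0:ℝ) < m := by exact_mod_cast hm
  have hmem : ∀ j ∈ Finset.univ, (1 + d * μ j) ∈ Set.Ioi (0:ℝ) := fun j _ => by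
    have := mul_nonneg hd (hμ j); simp only [Set.mem_Ioi]; linarith
  have h₀ : ∀ j ∈ Finset.univ, (0:ℝ) ≤ (fun _ : Fin m => 1/(m:ℝ)) j := fun _ _ => by positivity
  have h₁ : ∑ _j : Fin m, (1/(m:ℝ)) = 1 := by
    rw [Finset.sum_const, Finset.card_univ, Fintype.card_fin, nsmul_eq_mul]
    field_simp
  have h := strictConcaveOn_log_Ioi.concaveOn.le_map_sum h₀ h₁ hmem
  have hc : ∑ j, (1/(m:ℝ)) • (1 + d * μ j) = 1 + d * (τ/m) := by
    simp only [smul_eq_mul]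
    rw [← Finset.mul_sum, Finset.sum_add_distrib, Finset.sum_const, ← Finset.mul_sum, hsum,
      Finset.card_univ, Fintype.card_fin, nsmul_eq_mul, mul_one]
    field_simp
  rw [hc] at h
  simp only [smul_eq_mul, ← Finset.mul_sum] at h
  rw [Finset.sum_const, Finset.card_univ, Fintype.card_fin, nsmul_eq_mul]
  calc ∑ j, Real.log (1 + d * μ j)
      = (m:ℝ) * ((1/(m:ℝ)) * ∑ j, Real.log (1 + d * μ j)) := by field_simp
    _ ≤ (m:ℝ) * Real.log (1 + d * (τ/m)) := by
        exact mul_le_mul_of_nonneg_left h hm'.le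

lemma amgm_lt {m : ℕ} (hm : 0 < m) (d : ℝ) (hd : 0 < d) (μ : Fin m → ℝ)
    (hμ : ∀ j, 0 ≤ μ j) (τ : ℝ) (hsum : ∑ j, μ j = τ)
    (hnc : ∃ j k, μ j ≠ μ k) :
    ∑ j, Real.log (1 + d * μ j) < ∑ _j : Fin m, Real.log (1 + d * (τ / m)) := by
  have hm' : (0:ℝ) < m := by exact_mod_cast hm
  have hmem : ∀ j ∈ Finset.univ, (1 + d * μ j) ∈ Set.Ioi (0:ℝ) := fun j _ => by
    have := mul_nonneg hd.le (hμ j); simp only [Set.mem_Ioi]; linarith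
  have h₀ : ∀ j ∈ Finset.univ, (0:ℝ) < (fun _ : Fin m => 1/(m:ℝ)) j := fun _ _ => by positivity
  have h₁ : ∑ _j : Fin m, (1/(m:ℝ)) = 1 := by
    rw [Finset.sum_const, Finset.card_univ, Fintype.card_fin, nsmul_eq_mul]
    field_simp
  obtain ⟨j, k, hjk⟩ := hnc
  have hp : ∃ j ∈ Finset.univ, ∃ k ∈ Finset.univ,
      (1 + d * μ j : ℝ) ≠ (1 + d * μ k) := by
    refine ⟨j, Finset.mem_univ _, k, Finset.mem_univ _, fun h => hjk ?_⟩
    have : d * μ j = d * μ k := by linarith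
    exact mul_left_cancel₀ hd.ne' this
  have h := strictConcaveOn_log_Ioi.lt_map_sum h₀ h₁ hmem hp
  have hc : ∑ j, (1/(m:ℝ)) • (1 + d * μ j) = 1 + d * (τ/m) := by
    simp only [smul_eq_mul]
    rw [← Finset.mul_sum, Finset.sum_add_distrib, Finset.sum_const, ← Finset.mul_sum, hsum,
      Finset.card_univ, Fintype.card_fin, nsmul_eq_mul, mul_one]
    field_simp
  rw [hc] at h
  simp only [smul_eq_mul, ← Finset.mul_sum] at h
  rw [Finset.sum_const, Finset.card_univ, Fintype.card_fin, nsmul_eq_mul]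
  calc ∑ j, Real.log (1 + d * μ j)
      = (m:ℝ) * ((1/(m:ℝ)) * ∑ j, Real.log (1 + d * μ j)) := by field_simp
    _ < (m:ℝ) * Real.log (1 + d * (τ/m)) := by
        exact (mul_lt_mul_iff_right₀ hm').mpr h

/-- For PSD Hermitian `C_tx`, `P` with `P C_tx P^H ≠ 0`, `σ² > 0`, and PSD
Hermitian `C_rx ∈ ℂ^{m×m}` (`m ≥ 2`) with `tr C_rx = τ > 0` and `C_rx ≠ (τ/m) I`, the CMI
`log det(I + (1/σ²)(P C_tx P^H) ⊗ C_rx)` is strictly smaller than its value at the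
scaled identity `(τ/m) I`. -/
theorem stmt4 {n m p : ℕ} (hm : 2 ≤ m)
    (Ctx : Matrix (Fin n) (Fin n) ℂ) (hCtx : Ctx.PosSemidef)
    (P : Matrix (Fin p) (Fin n) ℂ) (hP : P * Ctx * Pᴴ ≠ 0)
    (σsq : ℝ) (hσ : 0 < σsq)
    (Crx : Matrix (Fin m) (Fin m) ℂ) (hCrx : Crx.PosSemidef)
    (τ : ℝ) (hτ : 0 < τ) (htr : Crx.trace = (τ : ℂ))
    (hne : Crx ≠ (τ / m : ℝ) • (1 : Matrix (Fin m) (Fin m) ℂ)) :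
    Real.log ((1 + (1 / σsq) • ((P * Ctx * Pᴴ) ⊗ₖ Crx)).det.re)
      < Real.log ((1 + (1 / σsq) •
          ((P * Ctx * Pᴴ) ⊗ₖ ((τ / m : ℝ) • (1 : Matrix (Fin m) (Fin m) ℂ)))).det.re) := by
  have hm0 : 0 < m := by omega
  have hmR : (0:ℝ) < m := by exact_mod_cast hm0
  set A : Matrix (Fin p) (Fin p) ℂ := P * Ctx * Pᴴ with hAdef
  have hApsd : A.PosSemidef := hCtx.mul_mul_conjTranspose_same P
  set s : ℝ := 1 / σsq with hsdef
  have hs0 : (0:ℝ) < s := by positivity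
  have hAH : A.IsHermitian := hApsd.1
  have hBH : Crx.IsHermitian := hCrx.1
  set lam : Fin p → ℝ := hAH.eigenvalues with hlamdef
  set μ : Fin m → ℝ := hBH.eigenvalues with hmudef
  have hlam : ∀ i, 0 ≤ lam i := hApsd.eigenvalues_nonneg
  have hμ : ∀ j, 0 ≤ μ j := hCrx.eigenvalues_nonneg
  set c : ℝ := τ / m with hcdef
  have hc0 : 0 < c := by positivity
  -- sum of eigenvalues of Crx equals τ
  have h1 : Crx.trace = ∑ j, ((μ j : ℝ) : ℂ) := by
    conv_lhs => rw [hBH.spectral_theorem, Unitary.conjStarAlgAut_apply]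
    rw [trace_mul_cycle, mem_unitaryGroup_iff'.mp hBH.eigenvectorUnitary.2, one_mul,
      trace_diagonal]
    rfl
  have hsum : ∑ j, μ j = τ := by
    have h2 : ((∑ j, μ j : ℝ) : ℂ) = ((τ : ℝ) : ℂ) := by
      rw [Complex.ofReal_sum, ← htr, h1]
    exact_mod_cast h2
  -- the scaled identity
  have hB1 : ((c : ℝ) • (1 : Matrix (Fin m) (Fin m) ℂ)) = ((c : ℝ) : ℂ) • 1 := by
    ext i j
    simp [Matrix.smul_apply, Complex.real_smul]
  have hBH2 : ((c : ℝ) • (1 : Matrix (Fin m) (Fin m) ℂ)).IsHermitian := by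
    rw [hB1]
    simp [Matrix.IsHermitian, conjTranspose_smul, Complex.star_def, Complex.conj_ofReal]
  -- eigenvalues of the scaled identity
  have hν : ∀ j, hBH2.eigenvalues j = c := by
    have hV2 : star (hBH2.eigenvectorUnitary : Matrix (Fin m) (Fin m) ℂ)
        * (hBH2.eigenvectorUnitary : Matrix (Fin m) (Fin m) ℂ) = 1 :=
      mem_unitaryGroup_iff'.mp hBH2.eigenvectorUnitary.2
    have h2 : star (hBH2.eigenvectorUnitary : Matrix (Fin m) (Fin m) ℂ)
        * ((c : ℝ) • (1 : Matrix (Fin m) (Fin m) ℂ))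
        * (hBH2.eigenvectorUnitary : Matrix (Fin m) (Fin m) ℂ) = ((c : ℝ) : ℂ) • 1 := by
      rw [mul_smul_comm, mul_one, smul_mul_assoc, hV2]
      exact hB1
    have h4 : diagonal (RCLike.ofReal ∘ hBH2.eigenvalues)
        = (((c : ℝ) : ℂ) • 1 : Matrix (Fin m) (Fin m) ℂ) := by
      rw [← hBH2.conjStarAlgAut_star_eigenvectorUnitary, Unitary.conjStarAlgAut_star_apply]
      exact h2
    intro j
    have h3 := congrFun (congrFun h4 j) j
    simp only [diagonal_apply_eq, Function.comp_apply, Matrix.smul_apply, Matrix.one_apply_eq,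
      smul_eq_mul, mul_one] at h3
    exact Complex.ofReal_inj.mp h3
  -- if all eigenvalues of Crx were τ/m, Crx would be the scaled identity
  have hCrx_eq : (∀ j, μ j = c) → Crx = (c : ℝ) • (1 : Matrix (Fin m) (Fin m) ℂ) := by
    intro hall
    have hdiag : diagonal (RCLike.ofReal ∘ μ) = (((c : ℝ) : ℂ) • 1 : Matrix (Fin m) (Fin m) ℂ) := by
      ext j k
      rcases eq_or_ne j k with h | h
      · subst h; simp [hall j]
      · simp [h]
    rw [hBH.spectral_theorem, hdiag, Unitary.conjStarAlgAut_apply, mul_smul_comm, mul_one, smul_mul_assoc,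
      mem_unitaryGroup_iff.mp hBH.eigenvectorUnitary.2, hB1]
  have hnc : ∃ j k, μ j ≠ μ k := by
    by_contra hcon
    push_neg at hcon
    have hval : μ ⟨0, hm0⟩ = c := by
      have hsm : ∑ j, μ j = (m : ℝ) * μ ⟨0, hm0⟩ := by
        rw [Finset.sum_congr rfl fun j _ => hcon j ⟨0, hm0⟩, Finset.sum_const,
          Finset.card_univ, Fintype.card_fin, nsmul_eq_mul]
      rw [hsum] at hsm
      rw [hcdef]
      field_simp
      linarith
    exact hne (hCrx_eq fun j => (hcon j ⟨0, hm0⟩).trans hval)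
  -- A has a positive eigenvalue
  have hex : ∃ i, 0 < lam i := by
    by_contra hcon
    push_neg at hcon
    apply hP
    have hz : ∀ i, lam i = 0 := fun i => le_antisymm (hcon i) (hlam i)
    have hdiag : diagonal (RCLike.ofReal ∘ lam) = (0 : Matrix (Fin p) (Fin p) ℂ) := by
      ext i k
      rcases eq_or_ne i k with h | h
      · subst h; simp [hz i]
      · simp [h]
    show A = 0
    rw [hAH.spectral_theorem, hdiag, Unitary.conjStarAlgAut_apply, mul_zero, zero_mul]
  -- determinant computations
  have hdetL : (1 + s • (A ⊗ₖ Crx)).det.re = ∏ i, ∏ j, (1 + s * (lam i * μ j)) := by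
    rw [det_key A hAH Crx hBH s,
      show (∏ i, ∏ j, (((1 + s * (lam i * μ j)) : ℝ) : ℂ))
          = ((∏ i, ∏ j, (1 + s * (lam i * μ j)) : ℝ) : ℂ) by push_cast; rfl,
      Complex.ofReal_re]
  have hdetR : (1 + s • (A ⊗ₖ ((c : ℝ) • (1 : Matrix (Fin m) (Fin m) ℂ)))).det.re
      = ∏ i, ∏ _j : Fin m, (1 + s * (lam i * c)) := by
    rw [det_key A hAH _ hBH2 s]
    simp only [hν]
    rw [show (∏ i, ∏ _j : Fin m, (((1 + s * (lam i * c)) : ℝ) : ℂ))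
          = ((∏ i, ∏ _j : Fin m, (1 + s * (lam i * c)) : ℝ) : ℂ) by push_cast; rfl,
      Complex.ofReal_re]
  rw [hdetL, hdetR]
  have hposL : ∀ i j, 0 < 1 + s * (lam i * μ j) := fun i j => by
    have := mul_nonneg hs0.le (mul_nonneg (hlam i) (hμ j)); linarith
  have hposR : ∀ (i : Fin p) (_j : Fin m), 0 < 1 + s * (lam i * c) := fun i _ => by
    have := mul_nonneg hs0.le (mul_nonneg (hlam i) hc0.le); linarith
  rw [log_prod_prod _ hposL, log_prod_prod _ hposR]
  obtain ⟨i₀, hi₀⟩ := hex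
  apply Finset.sum_lt_sum
  · intro i _
    have h := amgm_le hm0 (s * lam i) (mul_nonneg hs0.le (hlam i)) μ hμ τ hsum
    rw [hcdef]
    simpa [mul_assoc] using h
  · refine ⟨i₀, Finset.mem_univ _, ?_⟩
    have h := amgm_lt hm0 (s * lam i₀) (mul_pos hs0 hi₀) μ hμ τ hsum hnc
    rw [hcdef]
    simpa [mul_assoc] using h
end

section
/- Let C ∈ ℂ^{n×n} be positive semidefinite Hermitian with eigendecomposition C = U Λ U^H where the eigenvalues λ_1 ≥ λ_2 ≥ … ≥ λ_n on the diagonal of Λ are in decreasing order. Among all matrices P ∈ ℂ^{p×n} (p ≤ n) with P P^H = ρ I_p (equal power per pilot, sub-unitary scaled rows), the matrix P = √ρ · (first p rows of U^H) maximizes log det(I + (1/σ²) P C P^H), achieving the value Σ_{i=1}^p log(1 + (ρ/σ²) λ_i). -/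
open Matrix
open scoped ComplexOrder
open Finset


lemma det_mul_expand {p n : ℕ} {R : Type*} [CommRing R]
    (M : Matrix (Fin p) (Fin n) R) (N : Matrix (Fin n) (Fin p) R) :
    (M * N).det = ∑ f : Fin p → Fin n, (∏ i, N (f i) i) * (M.submatrix id f).det := by
  rw [det_apply']
  have h1 : ∀ σ : Equiv.Perm (Fin p), ∏ i, (M * N) (σ i) i
      = ∑ f : Fin p → Fin n, ∏ i, (M (σ i) (f i) * N (f i) i) := by
    intro σ
    simp_rw [mul_apply]
    rw [Finset.prod_univ_sum]
    simp [Fintype.piFinset_univ]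
  simp_rw [h1, Finset.mul_sum]
  rw [Finset.sum_comm]
  refine Finset.sum_congr rfl fun f _ => ?_
  rw [det_apply', Finset.mul_sum]
  refine Finset.sum_congr rfl fun σ _ => ?_
  rw [Finset.prod_mul_distrib]
  simp only [submatrix_apply, id_eq]
  ring

lemma det_conj_diag {p n : ℕ} (Q : Matrix (Fin p) (Fin n) ℂ) (d : Fin n → ℂ) :
    (p.factorial : ℂ) * (Q * (Matrix.diagonal d * Qᴴ)).det
      = ∑ f : Fin p → Fin n,
          (∏ i, d (f i)) * ((Q.submatrix id f).det * star (Q.submatrix id f).det) := by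
  set t : (Fin p → Fin n) → ℂ :=
    fun f => (∏ i, (Matrix.diagonal d * Qᴴ) (f i) i) * (Q.submatrix id f).det with ht
  have hdet : (Q * (Matrix.diagonal d * Qᴴ)).det = ∑ f : Fin p → Fin n, t f :=
    det_mul_expand Q (Matrix.diagonal d * Qᴴ)
  have hcomp : ∀ σ : Equiv.Perm (Fin p), (∑ f : Fin p → Fin n, t (f ∘ σ)) = ∑ f, t f := by
    intro σ
    have hbij : Function.Bijective (fun f : Fin p → Fin n => f ∘ σ) := by
      constructor
      · intro f g h
        funext i
        have := congrFun h (σ.symm i)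
        simpa using this
      · intro g
        exact ⟨g ∘ σ.symm, funext fun i => by simp⟩
    exact hbij.sum_comp t
  have hinner : ∀ f : Fin p → Fin n, (∑ σ : Equiv.Perm (Fin p), t (f ∘ σ))
      = (∏ i, d (f i)) * ((Q.submatrix id f).det * star (Q.submatrix id f).det) := by
    intro f
    set Y := Q.submatrix id f with hY
    have hterm : ∀ σ : Equiv.Perm (Fin p), t (f ∘ σ)
        = (∏ i, d (f i)) * Y.det * (((Equiv.Perm.sign σ : ℤ) : ℂ) * ∏ i, Yᴴ (σ i) i) := by
      intro σ
      have hsub : Q.submatrix id (f ∘ σ) = Y.submatrix id σ := by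
        rw [hY, submatrix_submatrix]
        rfl
      have hdp : (Q.submatrix id (f ∘ σ)).det = ((Equiv.Perm.sign σ : ℤ) : ℂ) * Y.det := by
        rw [hsub, det_permute']
      have hentry : ∀ i, (Matrix.diagonal d * Qᴴ) ((f ∘ σ) i) i
          = d (f (σ i)) * star (Q i (f (σ i))) := by
        intro i
        simp [Matrix.diagonal_mul, conjTranspose_apply]
      rw [ht]
      simp only [hentry, hdp]
      rw [Finset.prod_mul_distrib]
      have h1 : (∏ i, d (f (σ i))) = ∏ i, d (f i) := Equiv.prod_comp σ (fun i => d (f i))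
      have h2 : ∀ i, star (Q i (f (σ i))) = Yᴴ (σ i) i := by
        intro i; simp [hY, conjTranspose_apply]
      simp_rw [h1, h2]
      ring
    simp_rw [hterm]
    rw [← Finset.mul_sum, ← det_apply', det_conjTranspose]
    ring
  calc (p.factorial : ℂ) * (Q * (Matrix.diagonal d * Qᴴ)).det
      = ∑ _σ : Equiv.Perm (Fin p), ∑ f, t f := by
        rw [hdet, Finset.sum_const, card_univ, Fintype.card_perm, Fintype.card_fin, nsmul_eq_mul]
    _ = ∑ σ : Equiv.Perm (Fin p), ∑ f : Fin p → Fin n, t (f ∘ σ) := by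
        refine Finset.sum_congr rfl fun σ _ => (hcomp σ).symm
    _ = ∑ f : Fin p → Fin n, ∑ σ : Equiv.Perm (Fin p), t (f ∘ σ) := Finset.sum_comm
    _ = _ := Finset.sum_congr rfl fun f _ => hinner f

lemma prod_inj_le {p n : ℕ} (hpn : p ≤ n) (b : Fin n → ℝ) (hb0 : ∀ i, 0 ≤ b i)
    (hmono : ∀ i j : Fin n, i ≤ j → b j ≤ b i) (f : Fin p → Fin n)
    (hf : Function.Injective f) :
    (∏ i, b (f i)) ≤ ∏ i : Fin p, b (Fin.castLE hpn i) := by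
  classical
  set S : Finset (Fin n) := Finset.univ.image f with hS
  have hcard : S.card = p := by
    rw [hS, Finset.card_image_of_injective _ hf, Finset.card_univ, Fintype.card_fin]
  set g := S.orderEmbOfFin hcard with hg
  have hprod1 : (∏ i, b (f i)) = ∏ x ∈ S, b x := by
    rw [hS, Finset.prod_image (fun x _ y _ h => hf h)]
  have hSg : S = Finset.univ.image g := by
    ext x
    simp only [Finset.mem_image, Finset.mem_univ, true_and]
    constructor
    · intro hx
      have : x ∈ Set.range g := by rw [hg, Finset.range_orderEmbOfFin]; exact hx
      obtain ⟨i, hi⟩ := this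
      exact ⟨i, hi⟩
    · rintro ⟨i, rfl⟩
      exact Finset.orderEmbOfFin_mem S hcard i
  have hprod2 : (∏ x ∈ S, b x) = ∏ i : Fin p, b (g i) := by
    rw [hSg, Finset.prod_image (fun x _ y _ h => g.injective h)]
  have hle0 : ∀ k : ℕ, ∀ i : Fin p, (i : ℕ) = k → k ≤ (g i : ℕ) := by
    intro k
    induction k with
    | zero => intro i _; exact Nat.zero_le _
    | succ k ih =>
        intro i hi
        have hkp : k < p := by have := i.isLt; omega
        have hji : (⟨k, hkp⟩ : Fin p) < i := by rw [Fin.lt_def]; simp; omega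
        have h1 : (g ⟨k, hkp⟩ : ℕ) < (g i : ℕ) := g.strictMono hji
        have h2 : k ≤ (g ⟨k, hkp⟩ : ℕ) := ih ⟨k, hkp⟩ rfl
        omega
  have hle : ∀ i : Fin p, (i : ℕ) ≤ (g i : ℕ) := fun i => hle0 (i : ℕ) i rfl
  rw [hprod1, hprod2]
  refine Finset.prod_le_prod (fun i _ => hb0 _) (fun i _ => ?_)
  exact hmono _ _ (by rw [Fin.le_def]; simpa using hle i)

lemma det_key_s12 {p n : ℕ} (hpn : p ≤ n) (Q : Matrix (Fin p) (Fin n) ℂ)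
    (hQ : Q * Qᴴ = 1) (b : Fin n → ℝ) (hb1 : ∀ i, 1 ≤ b i)
    (hmono : ∀ i j : Fin n, i ≤ j → b j ≤ b i) :
    0 ≤ (Q * (Matrix.diagonal (fun i => (b i : ℂ)) * Qᴴ)).det.re ∧
      (Q * (Matrix.diagonal (fun i => (b i : ℂ)) * Qᴴ)).det.re
        ≤ ∏ i : Fin p, b (Fin.castLE hpn i) := by
  classical
  set T : ℝ := ∏ i : Fin p, b (Fin.castLE hpn i) with hT
  set w : (Fin p → Fin n) → ℝ := fun f => Complex.normSq (Q.submatrix id f).det with hw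
  have hb0 : ∀ i, 0 ≤ b i := fun i => le_trans zero_le_one (hb1 i)
  -- real form of the two identities
  have hid : (p.factorial : ℝ) * (Q * (Matrix.diagonal (fun i => (b i : ℂ)) * Qᴴ)).det.re
      = ∑ f : Fin p → Fin n, (∏ i, b (f i)) * w f := by
    have := congrArg Complex.re (det_conj_diag Q (fun i => (b i : ℂ)))
    simpa [Complex.mul_re, Complex.mul_conj, ← Complex.ofReal_prod, hw] using this
  have hid1 : (p.factorial : ℝ) = ∑ f : Fin p → Fin n, w f := by
    have h := congrArg Complex.re (det_conj_diag Q (fun _ : Fin n => (1 : ℂ)))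
    rw [Matrix.diagonal_one, Matrix.one_mul, hQ, det_one] at h
    simpa [Complex.mul_conj, hw] using h
  have hwnn : ∀ f : Fin p → Fin n, 0 ≤ w f := fun f => Complex.normSq_nonneg _
  have hbound : ∀ f : Fin p → Fin n, (∏ i, b (f i)) * w f ≤ T * w f := by
    intro f
    by_cases hf : Function.Injective f
    · exact mul_le_mul_of_nonneg_right (prod_inj_le hpn b hb0 hmono f hf) (hwnn f)
    · have : (Q.submatrix id f).det = 0 := by
        rw [Function.not_injective_iff] at hf
        obtain ⟨i, j, hij, hne⟩ := hf
        exact det_zero_of_column_eq hne (fun k => by simp [hij])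
      rw [hw]
      simp [this]
  have hnn : ∀ f : Fin p → Fin n, 0 ≤ (∏ i, b (f i)) * w f := by
    intro f
    exact mul_nonneg (Finset.prod_nonneg fun i _ => hb0 _) (hwnn f)
  have hfacpos : (0:ℝ) < (p.factorial : ℝ) := by positivity
  constructor
  · have h1 : 0 ≤ (p.factorial : ℝ) * (Q * (Matrix.diagonal (fun i => (b i : ℂ)) * Qᴴ)).det.re := by
      rw [hid]; exact Finset.sum_nonneg fun f _ => hnn f
    nlinarith
  · have h2 : (p.factorial : ℝ) * (Q * (Matrix.diagonal (fun i => (b i : ℂ)) * Qᴴ)).det.re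
        ≤ T * (p.factorial : ℝ) := by
      rw [hid, hid1, Finset.mul_sum]
      exact Finset.sum_le_sum fun f _ => hbound f
    nlinarith

lemma rsmul {m k : Type*} (r : ℝ) (M : Matrix m k ℂ) : r • M = ((r : ℂ)) • M := by
  ext i j
  simp [Matrix.smul_apply, Complex.real_smul]

/-- Let `C = U Λ U^H` be PSD with `U` unitary and eigenvalues
`λ_1 ≥ … ≥ λ_n` in decreasing order. Among all `P ∈ ℂ^{p×n}` (`p ≤ n`) with
`P P^H = ρ I_p`, the matrix `P = √ρ · (first p rows of U^H)` maximizes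
`log det(I + (1/σ²) P C P^H)`, achieving the value `Σ_{i=1}^p log(1 + (ρ/σ²) λ_i)`. -/
theorem stmt12 {n p : ℕ} (hpn : p ≤ n)
    (C U : Matrix (Fin n) (Fin n) ℂ) (lam : Fin n → ℝ)
    (hC : C.PosSemidef) (hU : U ∈ Matrix.unitaryGroup (Fin n) ℂ)
    (hdec : C = U * Matrix.diagonal (fun i => (lam i : ℂ)) * Uᴴ)
    (hsort : ∀ i j : Fin n, i ≤ j → lam j ≤ lam i)
    (ρ σsq : ℝ) (hρ : 0 < ρ) (hσ : 0 < σsq) :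
    (((Real.sqrt ρ : ℝ) • (Uᴴ).submatrix (Fin.castLE hpn) id) *
        ((Real.sqrt ρ : ℝ) • (Uᴴ).submatrix (Fin.castLE hpn) id)ᴴ
        = (ρ : ℂ) • (1 : Matrix (Fin p) (Fin p) ℂ))
    ∧ (Real.log ((1 + (1 / σsq) •
          (((Real.sqrt ρ : ℝ) • (Uᴴ).submatrix (Fin.castLE hpn) id) * C *
            ((Real.sqrt ρ : ℝ) • (Uᴴ).submatrix (Fin.castLE hpn) id)ᴴ)).det.re)
        = ∑ i : Fin p, Real.log (1 + ρ / σsq * lam (Fin.castLE hpn i)))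
    ∧ (∀ P : Matrix (Fin p) (Fin n) ℂ, P * Pᴴ = (ρ : ℂ) • (1 : Matrix (Fin p) (Fin p) ℂ) →
        Real.log ((1 + (1 / σsq) • (P * C * Pᴴ)).det.re)
          ≤ ∑ i : Fin p, Real.log (1 + ρ / σsq * lam (Fin.castLE hpn i))) := by
  have hUU : U * Uᴴ = 1 := by
    have := (Matrix.mem_unitaryGroup_iff).mp hU
    rwa [Matrix.star_eq_conjTranspose] at this
  have hU'U : Uᴴ * U = 1 := by
    have := (Matrix.mem_unitaryGroup_iff').mp hU
    rwa [Matrix.star_eq_conjTranspose] at this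
  set Λ : Matrix (Fin n) (Fin n) ℂ := Matrix.diagonal (fun i => (lam i : ℂ)) with hΛ
  -- eigenvalues are nonnegative
  have hUCU : Uᴴ * C * U = Λ := by
    rw [hdec]
    calc Uᴴ * (U * Λ * Uᴴ) * U = (Uᴴ * U) * Λ * (Uᴴ * U) := by
          simp only [Matrix.mul_assoc]
      _ = Λ := by rw [hU'U]; simp
  have hΛpsd : Λ.PosSemidef := by
    have := hC.conjTranspose_mul_mul_same U
    rwa [hUCU] at this
  have hlam : ∀ i, 0 ≤ lam i := by
    intro i
    have := (Matrix.posSemidef_diagonal_iff).mp hΛpsd i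
    exact Complex.zero_le_real.mp this
  have hcpos : 0 < ρ / σsq := div_pos hρ hσ
  set b : Fin n → ℝ := fun i => 1 + ρ / σsq * lam i with hb
  have hb1 : ∀ i, 1 ≤ b i := fun i => le_add_of_nonneg_right (mul_nonneg hcpos.le (hlam i))
  have hbmono : ∀ i j : Fin n, i ≤ j → b j ≤ b i := by
    intro i j hij
    have := hsort i j hij
    simp only [hb]
    nlinarith
  have hbpos : ∀ i, (0:ℝ) < b i := fun i => lt_of_lt_of_le one_pos (hb1 i)
  set V : Matrix (Fin p) (Fin n) ℂ := (Uᴴ).submatrix (Fin.castLE hpn) id with hV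
  have hVH : Vᴴ = U.submatrix id (Fin.castLE hpn) := by
    rw [hV, conjTranspose_submatrix, conjTranspose_conjTranspose]
  have hcastinj : Function.Injective (Fin.castLE hpn) := Fin.castLE_injective hpn
  have hone : (1 : Matrix (Fin n) (Fin n) ℂ).submatrix (Fin.castLE hpn) (Fin.castLE hpn)
      = (1 : Matrix (Fin p) (Fin p) ℂ) := by
    ext i j
    simp [Matrix.one_apply, hcastinj.eq_iff]
  have hVV : V * Vᴴ = 1 := by
    rw [hVH, hV]
    rw [← Matrix.submatrix_mul Uᴴ U (Fin.castLE hpn) id (Fin.castLE hpn) Function.bijective_id,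
      hU'U, hone]
  have hs : ((Real.sqrt ρ : ℂ)) * ((Real.sqrt ρ : ℂ)) = (ρ : ℂ) := by
    rw [← Complex.ofReal_mul, Real.mul_self_sqrt hρ.le]
  have hsmul : (Real.sqrt ρ : ℝ) • V = ((Real.sqrt ρ : ℂ)) • V := rsmul _ _
  have hsmulH : (((Real.sqrt ρ : ℂ)) • V)ᴴ = ((Real.sqrt ρ : ℂ)) • Vᴴ := by
    rw [conjTranspose_smul, Complex.star_def, Complex.conj_ofReal]
  have hcomb : ∀ (k : ℕ) (g : Fin k → ℝ),
      (1 : Matrix (Fin k) (Fin k) ℂ) + ((ρ / σsq : ℝ) : ℂ) • Matrix.diagonal (fun i => (g i : ℂ))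
        = Matrix.diagonal (fun i => ((1 + ρ / σsq * g i : ℝ) : ℂ)) := by
    intro k g
    ext i j
    rcases eq_or_ne i j with rfl | h
    · simp only [Matrix.add_apply, Matrix.smul_apply, Matrix.diagonal_apply_eq,
        Matrix.one_apply_eq, smul_eq_mul]
      push_cast
      ring
    · simp [Matrix.diagonal_apply_ne _ h, Matrix.one_apply_ne h]
  -- PART 1
  have part1 : ((Real.sqrt ρ : ℝ) • V) * ((Real.sqrt ρ : ℝ) • V)ᴴ
      = (ρ : ℂ) • (1 : Matrix (Fin p) (Fin p) ℂ) := by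
    rw [hsmul, hsmulH, Matrix.smul_mul, Matrix.mul_smul, smul_smul, hs, hVV]
  refine ⟨part1, ?_, ?_⟩
  · -- PART 2
    have hVCV : V * C * Vᴴ = Matrix.diagonal (fun i => (lam (Fin.castLE hpn i) : ℂ)) := by
      rw [hVH, hV]
      rw [show (Uᴴ).submatrix (Fin.castLE hpn) id * C = (Uᴴ * C).submatrix (Fin.castLE hpn) id by
        simpa [Matrix.submatrix_id_id] using
          (Matrix.submatrix_mul Uᴴ C (Fin.castLE hpn) id id Function.bijective_id).symm]
      rw [← Matrix.submatrix_mul (Uᴴ * C) U (Fin.castLE hpn) id (Fin.castLE hpn)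
        Function.bijective_id, hUCU, hΛ, Matrix.submatrix_diagonal _ _ hcastinj]
      rfl
    have hPCP : ((Real.sqrt ρ : ℝ) • V) * C * ((Real.sqrt ρ : ℝ) • V)ᴴ
        = (ρ : ℂ) • (V * C * Vᴴ) := by
      rw [hsmul, hsmulH, Matrix.smul_mul, Matrix.smul_mul, Matrix.mul_smul, smul_smul, hs]
    have hcoef : ((1 / σsq : ℝ) : ℂ) * (ρ : ℂ) = ((ρ / σsq : ℝ) : ℂ) := by
      push_cast
      field_simp
    have hmat : (1 + (1 / σsq) • (((Real.sqrt ρ : ℝ) • V) * C * ((Real.sqrt ρ : ℝ) • V)ᴴ))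
        = Matrix.diagonal (fun i => ((b (Fin.castLE hpn i) : ℝ) : ℂ)) := by
      rw [hPCP, hVCV, rsmul, smul_smul, hcoef, hcomb p (fun i => lam (Fin.castLE hpn i))]
    rw [hmat, det_diagonal]
    rw [show (∏ i : Fin p, ((b (Fin.castLE hpn i) : ℝ) : ℂ))
        = ((∏ i : Fin p, b (Fin.castLE hpn i) : ℝ) : ℂ) by push_cast; rfl]
    rw [Complex.ofReal_re, Real.log_prod (fun i _ => (hbpos _).ne')]
  · -- PART 3
    intro P hP
    set s : ℂ := (Real.sqrt ρ : ℂ) with hsdef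
    have hsne : s ≠ 0 := by
      simp [hsdef, Complex.ofReal_ne_zero, Real.sqrt_ne_zero', hρ]
    set Q : Matrix (Fin p) (Fin n) ℂ := s⁻¹ • (P * U) with hQdef
    have hQH : Qᴴ = s⁻¹ • (Uᴴ * Pᴴ) := by
      rw [hQdef, conjTranspose_smul, conjTranspose_mul]
      congr 1
      rw [hsdef, ← Complex.ofReal_inv]
      exact Complex.conj_ofReal _
    have hss : s⁻¹ * s⁻¹ = ((ρ : ℂ))⁻¹ := by
      rw [← mul_inv, hs]
    have hρne : (ρ : ℂ) ≠ 0 := Complex.ofReal_ne_zero.mpr hρ.ne'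
    have hQQ : Q * Qᴴ = 1 := by
      rw [hQdef, hQH, Matrix.smul_mul, Matrix.mul_smul, smul_smul, hss]
      have : P * U * (Uᴴ * Pᴴ) = P * Pᴴ := by
        calc P * U * (Uᴴ * Pᴴ) = P * (U * Uᴴ) * Pᴴ := by simp only [Matrix.mul_assoc]
          _ = P * Pᴴ := by rw [hUU]; simp
      rw [this, hP, smul_smul, inv_mul_cancel₀ hρne, one_smul]
    have hQLQ : Q * (Λ * Qᴴ) = ((ρ : ℂ))⁻¹ • (P * C * Pᴴ) := by
      rw [hQdef, hQH, Matrix.smul_mul, Matrix.mul_smul, Matrix.mul_smul, smul_smul, hss, hdec]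
      congr 1
      simp only [Matrix.mul_assoc]
    clear_value Q
    have hdiagb : Matrix.diagonal (fun i => ((b i : ℝ) : ℂ))
        = 1 + ((ρ / σsq : ℝ) : ℂ) • Λ := by
      rw [hΛ, hcomb n lam]
    have hQbQ : Q * (Matrix.diagonal (fun i => ((b i : ℝ) : ℂ)) * Qᴴ)
        = 1 + (1 / σsq : ℝ) • (P * C * Pᴴ) := by
      rw [hdiagb, Matrix.add_mul, Matrix.one_mul, Matrix.mul_add, hQQ, Matrix.smul_mul,
        Matrix.mul_smul, hQLQ, smul_smul, rsmul (1/σsq) (P * C * Pᴴ)]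
      congr 2
      rw [show ((ρ : ℂ))⁻¹ = ((ρ⁻¹ : ℝ) : ℂ) by push_cast; ring, ← Complex.ofReal_mul]
      congr 1
      field_simp
    obtain ⟨h0, hle⟩ := det_key_s12 hpn Q hQQ b hb1 hbmono
    rw [hQbQ] at h0 hle
    have hlog : ∑ i : Fin p, Real.log (1 + ρ / σsq * lam (Fin.castLE hpn i))
        = Real.log (∏ i : Fin p, b (Fin.castLE hpn i)) := by
      rw [Real.log_prod (fun i _ => (hbpos _).ne')]
    rw [hlog]
    rcases h0.eq_or_lt with h | h
    · rw [← h, Real.log_zero]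
      refine Real.log_nonneg ?_
      have h1 := Finset.prod_le_prod (s := Finset.univ) (f := fun _ : Fin p => (1:ℝ))
        (g := fun i => b (Fin.castLE hpn i)) (fun _ _ => zero_le_one) (fun i _ => hb1 _)
      simpa using h1
    · exact Real.log_le_log h hle
end

section
/- Let C_rx ∈ ℂ^{m×m} be positive semidefinite Hermitian with m ≥ 2 and tr(C_rx) = τ > 0. Then for every positive semidefinite Hermitian A ∈ ℂ^{p×p} and σ² > 0, log det(I + (1/σ²) A ⊗ C_rx) = log det(I + (1/σ²) τ A) for all such A if and only if rank(C_rx) = 1. -/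
open Matrix Kronecker
open scoped ComplexOrder

lemma weier {ι : Type*} (s : Finset ι) (f : ι → ℝ) (hf : ∀ i ∈ s, 0 ≤ f i) :
    1 + ∑ i ∈ s, f i ≤ ∏ i ∈ s, (1 + f i) := by
  classical
  induction s using Finset.cons_induction with
  | empty => simp
  | cons a s ha ih =>
    rw [Finset.sum_cons, Finset.prod_cons]
    have h1 : 0 ≤ f a := hf a (Finset.mem_cons_self a s)
    have h2 : ∀ i ∈ s, 0 ≤ f i := fun i hi => hf i (Finset.mem_cons_of_mem hi)
    have h3 := ih h2
    have h4 : 0 ≤ ∑ i ∈ s, f i := Finset.sum_nonneg h2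
    nlinarith

lemma det_one_add_smul_herm {n : ℕ} {A : Matrix (Fin n) (Fin n) ℂ} (hA : A.IsHermitian)
    (c : ℝ) : (1 + c • A).det = ∏ i, ((1 : ℂ) + c * hA.eigenvalues i) := by
  set U : Matrix (Fin n) (Fin n) ℂ := (hA.eigenvectorUnitary : Matrix (Fin n) (Fin n) ℂ)
  have hUU : U * star U = 1 := (Matrix.mem_unitaryGroup_iff).mp hA.eigenvectorUnitary.2
  set D : Matrix (Fin n) (Fin n) ℂ := Matrix.diagonal (RCLike.ofReal ∘ hA.eigenvalues)
  have key : 1 + c • A = U * (1 + c • D) * star U := by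
    rw [Matrix.mul_add, Matrix.add_mul, Matrix.mul_one, hUU, Matrix.mul_smul, Matrix.smul_mul,
      ← (hA.spectral_theorem.trans (Unitary.conjStarAlgAut_apply _ _))]
  rw [key, det_mul, det_mul, mul_comm, ← mul_assoc, ← det_mul, (Matrix.mem_unitaryGroup_iff').mp hA.eigenvectorUnitary.2, det_one,
    one_mul]
  have : (1 : Matrix (Fin n) (Fin n) ℂ) + c • D
      = Matrix.diagonal (fun i => (1 : ℂ) + c * hA.eigenvalues i) := by
    ext i j
    by_cases h : i = j <;>
      simp [h, D, Complex.real_smul, Matrix.one_apply, Matrix.diagonal_apply]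
  rw [this, det_diagonal]

lemma trace_eq_sum_eig {n : ℕ} {A : Matrix (Fin n) (Fin n) ℂ} (hA : A.IsHermitian) :
    A.trace = ∑ i, (hA.eigenvalues i : ℂ) := by
  conv_lhs => rw [hA.spectral_theorem, Unitary.conjStarAlgAut_apply]
  rw [Matrix.trace_mul_comm, ← Matrix.mul_assoc,
    (Matrix.mem_unitaryGroup_iff').mp hA.eigenvectorUnitary.2, Matrix.one_mul,
    Matrix.trace_diagonal]
  rfl

lemma psd_rank_one {m : ℕ} (C : Matrix (Fin m) (Fin m) ℂ) (hC : C.PosSemidef)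
    (h1 : C.rank = 1) : ∃ v : Matrix (Fin m) (Fin 1) ℂ, C = v * vᴴ := by
  have hH := hC.1
  have hr := hH.rank_eq_card_non_zero_eigs
  rw [h1] at hr
  obtain ⟨⟨i0, hi0⟩, huniq⟩ := Fintype.card_eq_one_iff.mp hr.symm
  have hzero : ∀ i, i ≠ i0 → hH.eigenvalues i = 0 := by
    intro i hi
    by_contra h
    exact hi (congrArg Subtype.val (huniq ⟨i, h⟩))
  have hpos : 0 ≤ hH.eigenvalues i0 := hC.eigenvalues_nonneg i0
  set s : ℂ := (Real.sqrt (hH.eigenvalues i0) : ℂ) with hs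
  set w : Matrix (Fin m) (Fin 1) ℂ :=
    Matrix.of (fun i (_ : Fin 1) => if i = i0 then s else 0) with hw
  refine ⟨(hH.eigenvectorUnitary : Matrix (Fin m) (Fin m) ℂ) * w, ?_⟩
  have hww : w * wᴴ = Matrix.diagonal (RCLike.ofReal ∘ hH.eigenvalues) := by
    ext i j
    rw [Matrix.mul_apply, Fin.sum_univ_one]
    simp only [Matrix.conjTranspose_apply, hw, Matrix.of_apply]
    by_cases hi : i = i0 <;> by_cases hj : j = i0
    · subst hi; subst hj
      simp [hs, Complex.conj_ofReal, ← Complex.ofReal_mul, Real.mul_self_sqrt hpos]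
    · have : i ≠ j := by rintro rfl; exact hj hi
      simp [hj, Matrix.diagonal_apply_ne _ this]
    · have : i ≠ j := by rintro rfl; exact hi hj
      simp [hi, Matrix.diagonal_apply_ne _ this]
    · have hij : hH.eigenvalues i = 0 := hzero i hi
      by_cases h : i = j
      · subst h; simp [hi, hij]
      · simp [hi, Matrix.diagonal_apply_ne _ h]
  rw [Matrix.conjTranspose_mul, ← Matrix.mul_assoc, Matrix.mul_assoc _ w, hww]
  have := hH.spectral_theorem
  rw [Unitary.conjStarAlgAut_apply, Matrix.star_eq_conjTranspose] at this
  exact this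

lemma det_kron_rank_one {p m : ℕ} (A : Matrix (Fin p) (Fin p) ℂ)
    (v : Matrix (Fin m) (Fin 1) ℂ) (c τ : ℝ)
    (hv : vᴴ * v = (τ : ℂ) • (1 : Matrix (Fin 1) (Fin 1) ℂ)) :
    (1 + c • (A ⊗ₖ (v * vᴴ))).det = (1 + c • ((τ : ℝ) • A)).det := by
  have h1 : c • (A ⊗ₖ (v * vᴴ))
      = ((c • A) ⊗ₖ v) * ((1 : Matrix (Fin p) (Fin p) ℂ) ⊗ₖ vᴴ) := by
    rw [← Matrix.mul_kronecker_mul, Matrix.mul_one, Matrix.smul_kronecker]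
  rw [h1, Matrix.det_one_add_mul_comm, ← Matrix.mul_kronecker_mul, Matrix.one_mul, hv,
    Matrix.kronecker_smul]
  rw [← Matrix.det_submatrix_equiv_self (Equiv.prodUnique (Fin p) (Fin 1))
    (1 + c • ((τ : ℝ) • A))]
  congr 1
  ext x y
  obtain ⟨i, a⟩ := x
  obtain ⟨j, b⟩ := y
  have ha : a = 0 := Subsingleton.elim a 0
  have hb : b = 0 := Subsingleton.elim b 0
  subst ha hb
  simp only [Matrix.add_apply, Matrix.smul_apply, Matrix.submatrix_apply,
    Matrix.kroneckerMap_apply, Matrix.one_apply, Prod.mk.injEq, Equiv.prodUnique_apply,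
    Complex.real_smul, smul_eq_mul]
  by_cases h : i = j <;> simp [h] <;> ring

/-- For PSD Hermitian `C_rx ∈ ℂ^{m×m}` with `m ≥ 2` and `tr C_rx = τ > 0`:
the equality `log det(I + (1/σ²) A ⊗ C_rx) = log det(I + (1/σ²) τ A)` holds for every
`σ² > 0` and every PSD Hermitian `A ∈ ℂ^{p×p}` (all sizes `p`) if and only if
`rank C_rx = 1`. -/
theorem stmt16 {m : ℕ} (hm : 2 ≤ m) (Crx : Matrix (Fin m) (Fin m) ℂ)
    (hCrx : Crx.PosSemidef) (τ : ℝ) (hτ : 0 < τ) (htr : Crx.trace = (τ : ℂ)) :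
    (∀ (σsq : ℝ), 0 < σsq → ∀ (p : ℕ) (A : Matrix (Fin p) (Fin p) ℂ), A.PosSemidef →
        Real.log ((1 + (1 / σsq) • (A ⊗ₖ Crx)).det.re)
          = Real.log ((1 + (1 / σsq) • ((τ : ℝ) • A)).det.re))
      ↔ Crx.rank = 1 := by
  have hev : ∀ i, 0 ≤ hCrx.1.eigenvalues i := hCrx.eigenvalues_nonneg
  have hsum : ∑ i, hCrx.1.eigenvalues i = τ := by
    have h := trace_eq_sum_eig hCrx.1
    rw [htr] at h
    exact_mod_cast h.symm
  constructor
  · intro h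
    have h1 := h 1 one_pos 1 (1 : Matrix (Fin 1) (Fin 1) ℂ) Matrix.PosSemidef.one
    have hone : (1 / (1 : ℝ)) = 1 := by norm_num
    rw [hone, one_smul, one_smul] at h1
    -- LHS determinant equals det (1 + Crx)
    have eL : ((1 : Matrix (Fin 1 × Fin m) (Fin 1 × Fin m) ℂ)
        + ((1 : Matrix (Fin 1) (Fin 1) ℂ) ⊗ₖ Crx)).det = (1 + Crx).det := by
      rw [← Matrix.det_submatrix_equiv_self (Equiv.uniqueProd (Fin m) (Fin 1)) (1 + Crx)]
      congr 1
      ext x y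
      obtain ⟨a, i⟩ := x
      obtain ⟨b, j⟩ := y
      have ha : a = 0 := Subsingleton.elim a 0
      have hb : b = 0 := Subsingleton.elim b 0
      subst ha hb
      simp only [Matrix.add_apply, Matrix.submatrix_apply, Matrix.kroneckerMap_apply,
        Matrix.one_apply, Prod.mk.injEq, Equiv.uniqueProd_apply]
      by_cases hij : i = j <;> simp [hij]
    have detc := det_one_add_smul_herm hCrx.1 1
    rw [one_smul] at detc
    simp only [Complex.ofReal_one, one_mul] at detc
    have detcoe : ((1 : Matrix (Fin m) (Fin m) ℂ) + Crx).det
        = ((∏ i, (1 + hCrx.1.eigenvalues i) : ℝ) : ℂ) := by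
      rw [detc]; push_cast; ring_nf
    have reL : ((1 : Matrix (Fin 1 × Fin m) (Fin 1 × Fin m) ℂ)
        + ((1 : Matrix (Fin 1) (Fin 1) ℂ) ⊗ₖ Crx)).det.re
        = ∏ i, (1 + hCrx.1.eigenvalues i) := by
      rw [eL, detcoe, Complex.ofReal_re]
    have reR : ((1 : Matrix (Fin 1) (Fin 1) ℂ) + (τ : ℝ) • 1).det.re = 1 + τ := by
      rw [Matrix.det_fin_one]
      simp [Matrix.add_apply, Matrix.one_apply, Complex.real_smul]
    rw [reL, reR] at h1
    have hprodpos : 0 < ∏ i, (1 + hCrx.1.eigenvalues i) :=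
      Finset.prod_pos fun i _ => by linarith [hev i]
    have heq : ∏ i, (1 + hCrx.1.eigenvalues i) = 1 + τ :=
      Real.log_injOn_pos (Set.mem_Ioi.mpr hprodpos) (Set.mem_Ioi.mpr (by linarith)) h1
    -- at least one nonzero eigenvalue
    have hex : ∃ i, hCrx.1.eigenvalues i ≠ 0 := by
      by_contra hc
      push_neg at hc
      rw [Finset.sum_congr rfl fun i _ => hc i, Finset.sum_const, smul_zero] at hsum
      linarith
    obtain ⟨i0, hi0⟩ := hex
    -- at most one nonzero eigenvalue
    have hat : ∀ i j, hCrx.1.eigenvalues i ≠ 0 → hCrx.1.eigenvalues j ≠ 0 → i = j := by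
      intro i j hi hj
      by_contra hij
      have hpi : 0 < hCrx.1.eigenvalues i := lt_of_le_of_ne (hev i) (Ne.symm hi)
      have hpj : 0 < hCrx.1.eigenvalues j := lt_of_le_of_ne (hev j) (Ne.symm hj)
      have hjmem : j ∈ Finset.univ.erase i :=
        Finset.mem_erase.mpr ⟨fun hh => hij hh.symm, Finset.mem_univ j⟩
      have e1 : ∏ k, (1 + hCrx.1.eigenvalues k)
          = (1 + hCrx.1.eigenvalues i) * ∏ k ∈ Finset.univ.erase i, (1 + hCrx.1.eigenvalues k) :=
        (Finset.mul_prod_erase _ _ (Finset.mem_univ i)).symm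
      have e2 : ∏ k ∈ Finset.univ.erase i, (1 + hCrx.1.eigenvalues k)
          = (1 + hCrx.1.eigenvalues j)
            * ∏ k ∈ (Finset.univ.erase i).erase j, (1 + hCrx.1.eigenvalues k) :=
        (Finset.mul_prod_erase _ _ hjmem).symm
      have s1 : ∑ k, hCrx.1.eigenvalues k
          = hCrx.1.eigenvalues i + ∑ k ∈ Finset.univ.erase i, hCrx.1.eigenvalues k :=
        (Finset.add_sum_erase _ _ (Finset.mem_univ i)).symm
      have s2 : ∑ k ∈ Finset.univ.erase i, hCrx.1.eigenvalues k
          = hCrx.1.eigenvalues j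
            + ∑ k ∈ (Finset.univ.erase i).erase j, hCrx.1.eigenvalues k :=
        (Finset.add_sum_erase _ _ hjmem).symm
      have hw := weier ((Finset.univ.erase i).erase j) hCrx.1.eigenvalues fun k _ => hev k
      have hsn : 0 ≤ ∑ k ∈ (Finset.univ.erase i).erase j, hCrx.1.eigenvalues k :=
        Finset.sum_nonneg fun k _ => hev k
      rw [← hsum, s1, s2] at heq
      rw [e1, e2] at heq
      nlinarith [mul_le_mul_of_nonneg_left hw
          (mul_nonneg (by linarith : (0:ℝ) ≤ 1 + hCrx.1.eigenvalues i)
            (by linarith : (0:ℝ) ≤ 1 + hCrx.1.eigenvalues j)),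
        mul_pos hpi hpj, mul_nonneg hpi.le hsn, mul_nonneg hpj.le hsn,
        mul_nonneg (mul_nonneg hpi.le hpj.le) hsn]
    rw [hCrx.1.rank_eq_card_non_zero_eigs, Fintype.card_eq_one_iff]
    exact ⟨⟨i0, hi0⟩, fun y => Subtype.ext (hat y.1 i0 y.2 hi0)⟩
  · intro hrank σsq hσ p A hA
    obtain ⟨v, hv⟩ := psd_rank_one Crx hCrx hrank
    have htr' : (v * vᴴ).trace = (τ : ℂ) := by rw [← hv]; exact htr
    have hvv : vᴴ * v = (τ : ℂ) • (1 : Matrix (Fin 1) (Fin 1) ℂ) := by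
      ext a b
      have ha : a = 0 := Subsingleton.elim a 0
      have hb : b = 0 := Subsingleton.elim b 0
      subst ha hb
      simp only [Matrix.smul_apply, Matrix.one_apply_eq, smul_eq_mul, mul_one]
      rw [Matrix.trace] at htr'
      simp only [Matrix.diag_apply, Matrix.mul_apply, Matrix.conjTranspose_apply,
        Fin.sum_univ_one] at htr' ⊢
      rw [← htr']
      exact Finset.sum_congr rfl fun i _ => mul_comm _ _
    rw [hv, det_kron_rank_one A v (1 / σsq) τ hvv]
end
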